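/- Let n be a positive integer and let D ∈ S^n be a symmetric matrix with zero diagonal such that B(D) = -(1/2) J D J is positive semidefinite, where J = I_n - (1/n)𝟏𝟏^T. Let s be the rank of B(D). Then there exist points y_1, ..., y_n ∈ ℝ^s such that ‖y_i - y_j‖^2 = D_{ij} for all i, j and the points are centered, i.e., y_1 + y_2 + ... + y_n = 0. -/

import Mathlib

open Matrix RealInnerProductSpace

/-- The centering matrix `J = I - (1/k) 𝟏𝟏ᵀ`. -/
noncomputable def centeringMatrix (k : ℕ) : Matrix (Fin k) (Fin k) ℝ :=
  1 - (k : ℝ)⁻¹ • Matrix.of (fun _ _ => (1 : ℝ))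

/-- The double-centered matrix `B(D) = -(1/2) J D J`. -/
noncomputable def doubleCenter {k : ℕ} (D : Matrix (Fin k) (Fin k) ℝ) :
    Matrix (Fin k) (Fin k) ℝ :=
  (-(1/2) : ℝ) • (centeringMatrix k * D * centeringMatrix k)

lemma centeringMatrix_apply (k : ℕ) (i j : Fin k) :
    centeringMatrix k i j = (if i = j then (1 : ℝ) else 0) - (k : ℝ)⁻¹ := by
  simp [centeringMatrix, Matrix.sub_apply, Matrix.one_apply, Matrix.smul_apply, smul_eq_mul]

lemma doubleCenter_apply {k : ℕ} (D : Matrix (Fin k) (Fin k) ℝ) (i j : Fin k) :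
    doubleCenter D i j = (-(1/2) : ℝ) * (D i j - (k : ℝ)⁻¹ * ∑ l, D l j
      - (k : ℝ)⁻¹ * ∑ l, D i l + (k : ℝ)⁻¹ * ((k : ℝ)⁻¹ * ∑ l, ∑ m, D m l)) := by
  have h1 : ∀ j : Fin k, (centeringMatrix k * D) i j = D i j - (k : ℝ)⁻¹ * ∑ l, D l j := by
    intro j
    simp [Matrix.mul_apply, centeringMatrix_apply, sub_mul, Finset.sum_sub_distrib,
      Finset.sum_ite_eq, Finset.mul_sum]
  have h2 : (centeringMatrix k * D * centeringMatrix k) i j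
      = (centeringMatrix k * D) i j - (k : ℝ)⁻¹ * ∑ l, (centeringMatrix k * D) i l := by
    simp [Matrix.mul_apply (M := centeringMatrix k * D), centeringMatrix_apply, mul_sub,
      Finset.sum_sub_distrib, Finset.sum_ite_eq', Finset.mul_sum, Finset.sum_mul, mul_comm]
  simp only [doubleCenter, Matrix.smul_apply, h2, h1, smul_eq_mul]
  rw [Finset.sum_sub_distrib, ← Finset.mul_sum]
  ring

theorem stmt8 (n : ℕ) (hn : 0 < n)
    (D : Matrix (Fin n) (Fin n) ℝ) (hsym : D.IsSymm)
    (hdiag : ∀ i, D i i = 0)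
    (hpsd : (doubleCenter D).PosSemidef) :
    ∃ y : Fin n → EuclideanSpace ℝ (Fin (doubleCenter D).rank),
      (∀ i j, ‖y i - y j‖ ^ 2 = D i j) ∧ ∑ i, y i = 0 := by
  classical
  set B := doubleCenter D with hBdef
  have hB : B.IsHermitian := hpsd.1
  have hnR : (n : ℝ) ≠ 0 := Nat.cast_ne_zero.mpr hn.ne'
  have hkey : ∀ i j, B i i + B j j - 2 * B i j = D i j := by
    intro i j
    have hri : ∑ l, D l i = ∑ l, D i l :=
      Finset.sum_congr rfl fun l _ => hsym.apply i l
    have hrj : ∑ l, D l j = ∑ l, D j l :=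
      Finset.sum_congr rfl fun l _ => hsym.apply j l
    simp only [hBdef, doubleCenter_apply, hdiag, hri, hrj]
    ring
  have hrow : ∀ i, ∑ j, B i j = 0 := by
    intro i
    calc ∑ j, B i j
        = (-(1/2) : ℝ) * ∑ j, (D i j - (n : ℝ)⁻¹ * ∑ l, D l j - (n : ℝ)⁻¹ * ∑ l, D i l
            + (n : ℝ)⁻¹ * ((n : ℝ)⁻¹ * ∑ l, ∑ m, D m l)) := by
          rw [Finset.mul_sum]
          exact Finset.sum_congr rfl fun j _ => doubleCenter_apply D i j
      _ = 0 := by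
          rw [Finset.sum_add_distrib, Finset.sum_sub_distrib, Finset.sum_sub_distrib,
            ← Finset.mul_sum, Finset.sum_const, Finset.card_univ, Fintype.card_fin,
            nsmul_eq_mul, Finset.sum_const, Finset.card_univ, Fintype.card_fin, nsmul_eq_mul]
          field_simp
          ring
  set V : Matrix (Fin n) (Fin n) ℝ := (hB.eigenvectorUnitary : Matrix (Fin n) (Fin n) ℝ)
    with hVdef
  have hspec : ∀ i j, B i j = ∑ k, hB.eigenvalues k * (V i k * V j k) := by
    intro i j
    conv_lhs => rw [hB.spectral_theorem, Unitary.conjStarAlgAut_apply, Matrix.mul_apply]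
    simp only [Matrix.mul_diagonal, Matrix.star_apply, star_trivial, Function.comp_apply,
      RCLike.ofReal_real_eq_id, id_eq]
    exact Finset.sum_congr rfl fun k _ => by ring
  have hcard : Fintype.card (Fin B.rank) = Fintype.card {k // hB.eigenvalues k ≠ 0} :=
    (Fintype.card_fin _).trans hB.rank_eq_card_non_zero_eigs
  let e : Fin B.rank ≃ {k // hB.eigenvalues k ≠ 0} := Fintype.equivOfCardEq hcard
  let y : Fin n → EuclideanSpace ℝ (Fin B.rank) := fun i =>
    (WithLp.equiv 2 _).symm fun t => Real.sqrt (hB.eigenvalues (e t)) * V i (e t)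
  have hgram : ∀ i j, ⟪y i, y j⟫ = B i j := by
    intro i j
    rw [PiLp.inner_apply]
    have step1 : ∀ t : Fin B.rank,
        ⟪(y i) t, (y j) t⟫ = hB.eigenvalues (e t) * (V i (e t) * V j (e t)) := by
      intro t
      simp only [y, WithLp.equiv_symm_apply, PiLp.toLp_apply, RCLike.inner_apply, conj_trivial]
      rw [mul_comm (Real.sqrt (hB.eigenvalues (e t)) * V j (e t))]
      rw [show (Real.sqrt (hB.eigenvalues (e t)) * V i (e t)) *
          (Real.sqrt (hB.eigenvalues (e t)) * V j (e t))
          = (Real.sqrt (hB.eigenvalues (e t)) * Real.sqrt (hB.eigenvalues (e t)))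
            * (V i (e t) * V j (e t)) by ring,
        Real.mul_self_sqrt (hpsd.eigenvalues_nonneg _)]
    rw [Finset.sum_congr rfl fun t _ => step1 t]
    rw [Equiv.sum_comp e (fun x : {k // hB.eigenvalues k ≠ 0} =>
      hB.eigenvalues x * (V i x * V j x))]
    rw [hspec i j]
    rw [← Finset.sum_filter_of_ne (p := fun k => hB.eigenvalues k ≠ 0)
      (fun k _ h => fun h0 => h (by rw [h0]; ring))]
    rw [← Finset.sum_subtype (Finset.univ.filter fun k => hB.eigenvalues k ≠ 0)
      (fun k => by simp) (fun k => hB.eigenvalues k * (V i k * V j k))]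
  refine ⟨y, ?_, ?_⟩
  · intro i j
    rw [norm_sub_sq_real, ← real_inner_self_eq_norm_sq, ← real_inner_self_eq_norm_sq,
      hgram, hgram, hgram, ← hkey i j]
    ring
  · rw [← inner_self_eq_zero (𝕜 := ℝ), sum_inner]
    rw [Finset.sum_congr rfl fun i _ => inner_sum Finset.univ y (y i)]
    calc ∑ i, ∑ j, ⟪y i, y j⟫ = ∑ i, ∑ j, B i j :=
          Finset.sum_congr rfl fun i _ => Finset.sum_congr rfl fun j _ => hgram i j
      _ = 0 := by simp [hrow]
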